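/- (Proposition A1.) Without any order-preservation assumption, define for t ∈ [0,1]: u̇(t) = min{μ(T1₁ ≤ t), μ(ios₀)} − max{0, μ(ios₁) − μ(T1₀ > t)}, l̇(t) = max{0, μ(ios₀) − μ(T1₁ > t)} − min{μ(T1₀ ≤ t), μ(ios₁)}, L̇π = max{0, μ(ios₀) + μ(ios₁) − 1}, and U̇π = min{μ(ios₀), μ(ios₁)}. If L̇π > 0, then FICE(t) ≤ u̇(t)/L̇π when u̇(t) ≥ 0 and FICE(t) ≤ u̇(t)/U̇π when u̇(t) < 0; and FICE(t) ≥ l̇(t)/U̇π when l̇(t) ≥ 0 and FICE(t) ≥ l̇(t)/L̇π when l̇(t) < 0. -/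

import Mathlib

open MeasureTheory Set

/-- `ios = {T1 ≤ 1} ∪ {T2 > 1}`, the infected-or-survivor event. -/
def iosEv {Ω : Type*} (T1 T2 : Ω → ℝ) : Set Ω :=
  {ω | T1 ω ≤ 1} ∪ {ω | (1:ℝ) < T2 ω}

/-- Elementary conditional probability `μ(E|F) = μ(E ∩ F)/μ(F)`. -/
noncomputable def condProbR {Ω : Type*} [MeasurableSpace Ω] (μ : Measure Ω)
    (E F : Set Ω) : ℝ :=
  (μ (E ∩ F)).toReal / (μ F).toReal

/-- `FICE(t) = μ({T1₁ ≤ t} | ios) − μ({T1₀ ≤ t} | ios)` with `ios = ios₀ ∩ ios₁`. -/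
noncomputable def FICE {Ω : Type*} [MeasurableSpace Ω] (μ : Measure Ω)
    (T1₀ T2₀ T1₁ T2₁ : Ω → ℝ) (t : ℝ) : ℝ :=
  condProbR μ {ω | T1₁ ω ≤ t} (iosEv T1₀ T2₀ ∩ iosEv T1₁ T2₁)
    - condProbR μ {ω | T1₀ ω ≤ t} (iosEv T1₀ T2₀ ∩ iosEv T1₁ T2₁)

/-- `u̇(t) = min{μ(T1₁ ≤ t), μ(ios₀)} − max{0, μ(ios₁) − μ(T1₀ > t)}`. -/
noncomputable def uDot {Ω : Type*} [MeasurableSpace Ω] (μ : Measure Ω)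
    (T1₀ T2₀ T1₁ T2₁ : Ω → ℝ) (t : ℝ) : ℝ :=
  min (μ {ω | T1₁ ω ≤ t}).toReal (μ (iosEv T1₀ T2₀)).toReal
    - max 0 ((μ (iosEv T1₁ T2₁)).toReal - (μ {ω | t < T1₀ ω}).toReal)

/-- `l̇(t) = max{0, μ(ios₀) − μ(T1₁ > t)} − min{μ(T1₀ ≤ t), μ(ios₁)}`. -/
noncomputable def lDot {Ω : Type*} [MeasurableSpace Ω] (μ : Measure Ω)
    (T1₀ T2₀ T1₁ T2₁ : Ω → ℝ) (t : ℝ) : ℝ :=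
  max 0 ((μ (iosEv T1₀ T2₀)).toReal - (μ {ω | t < T1₁ ω}).toReal)
    - min (μ {ω | T1₀ ω ≤ t}).toReal (μ (iosEv T1₁ T2₁)).toReal

/-- `L̇π = max{0, μ(ios₀) + μ(ios₁) − 1}`. -/
noncomputable def LPiDot {Ω : Type*} [MeasurableSpace Ω] (μ : Measure Ω)
    (T1₀ T2₀ T1₁ T2₁ : Ω → ℝ) : ℝ :=
  max 0 ((μ (iosEv T1₀ T2₀)).toReal + (μ (iosEv T1₁ T2₁)).toReal - 1)

/-- `U̇π = min{μ(ios₀), μ(ios₁)}`. -/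
noncomputable def UPiDot {Ω : Type*} [MeasurableSpace Ω] (μ : Measure Ω)
    (T1₀ T2₀ T1₁ T2₁ : Ω → ℝ) : ℝ :=
  min (μ (iosEv T1₀ T2₀)).toReal (μ (iosEv T1₁ T2₁)).toReal

/-- Proposition A1: FICE bounds without any ORP assumption. -/
theorem FICE_bounds_no_orp
    {Ω : Type*} [MeasurableSpace Ω] (μ : Measure Ω) [IsProbabilityMeasure μ]
    (T1₀ T2₀ T1₁ T2₁ : Ω → ℝ)
    (hT1₀ : Measurable T1₀) (hT2₀ : Measurable T2₀)
    (hT1₁ : Measurable T1₁) (hT2₁ : Measurable T2₁)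
    (t : ℝ) (ht0 : 0 ≤ t) (ht1 : t ≤ 1)
    (hLpos : 0 < LPiDot μ T1₀ T2₀ T1₁ T2₁) :
    (0 ≤ uDot μ T1₀ T2₀ T1₁ T2₁ t →
      FICE μ T1₀ T2₀ T1₁ T2₁ t ≤ uDot μ T1₀ T2₀ T1₁ T2₁ t / LPiDot μ T1₀ T2₀ T1₁ T2₁) ∧
    (uDot μ T1₀ T2₀ T1₁ T2₁ t < 0 →
      FICE μ T1₀ T2₀ T1₁ T2₁ t ≤ uDot μ T1₀ T2₀ T1₁ T2₁ t / UPiDot μ T1₀ T2₀ T1₁ T2₁) ∧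
    (0 ≤ lDot μ T1₀ T2₀ T1₁ T2₁ t →
      lDot μ T1₀ T2₀ T1₁ T2₁ t / UPiDot μ T1₀ T2₀ T1₁ T2₁ ≤ FICE μ T1₀ T2₀ T1₁ T2₁ t) ∧
    (lDot μ T1₀ T2₀ T1₁ T2₁ t < 0 →
      lDot μ T1₀ T2₀ T1₁ T2₁ t / LPiDot μ T1₀ T2₀ T1₁ T2₁ ≤ FICE μ T1₀ T2₀ T1₁ T2₁ t) := by
  classical
  set S0 := iosEv T1₀ T2₀ with hS0def
  set S1 := iosEv T1₁ T2₁ with hS1def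
  set F := S0 ∩ S1 with hFdef
  set E0 : Set Ω := {ω | T1₀ ω ≤ t} with hE0def
  set E1 : Set Ω := {ω | T1₁ ω ≤ t} with hE1def
  have hS1m : MeasurableSet S1 :=
    (measurableSet_le hT1₁ measurable_const).union (measurableSet_lt measurable_const hT2₁)
  -- real abbreviations
  set a := (μ (E1 ∩ F)).toReal with hadef
  set b := (μ (E0 ∩ F)).toReal with hbdef
  set p := (μ F).toReal with hpdef
  set s0 := (μ S0).toReal with hs0def
  set s1 := (μ S1).toReal with hs1def
  have tr_le : ∀ X Y : Set Ω, μ X ≤ μ Y → (μ X).toReal ≤ (μ Y).toReal := fun X Y h =>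
    ENNReal.toReal_le_toReal (measure_ne_top μ X) (measure_ne_top μ Y) |>.mpr h
  -- L ≤ p
  have hL_le_p : LPiDot μ T1₀ T2₀ T1₁ T2₁ ≤ p := by
    have h1 : μ S0 + μ S1 ≤ 1 + μ F := by
      rw [← measure_union_add_inter S0 hS1m]
      exact add_le_add (prob_le_one (μ := μ)) le_rfl
    have h2 : s0 + s1 ≤ 1 + p := by
      have := ENNReal.toReal_le_toReal
        (by finiteness : μ S0 + μ S1 ≠ ⊤) (by finiteness : (1 : ENNReal) + μ F ≠ ⊤) |>.mpr h1
      simpa [ENNReal.toReal_add, measure_ne_top] using this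
    simp only [LPiDot, ← hS0def, ← hS1def, ← hs0def, ← hs1def, max_le_iff]
    exact ⟨ENNReal.toReal_nonneg, by linarith⟩
  -- p ≤ U
  have hp_le_U : p ≤ UPiDot μ T1₀ T2₀ T1₁ T2₁ := by
    simp only [UPiDot, ← hS0def, ← hS1def, ← hs0def, ← hs1def, le_min_iff]
    exact ⟨tr_le _ _ (measure_mono inter_subset_left),
      tr_le _ _ (measure_mono inter_subset_right)⟩
  have hLpos' : 0 < LPiDot μ T1₀ T2₀ T1₁ T2₁ := hLpos
  have hppos : 0 < p := lt_of_lt_of_le hLpos' hL_le_p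
  have hUpos : 0 < UPiDot μ T1₀ T2₀ T1₁ T2₁ := lt_of_lt_of_le hppos hp_le_U
  -- set identities from t ≤ 1
  have hE0F : E0 ∩ F = E0 ∩ S1 := by
    ext ω
    simp only [hFdef, hE0def, hS0def, iosEv, mem_inter_iff, mem_setOf_eq, mem_union]
    constructor
    · rintro ⟨h1, _, h3⟩; exact ⟨h1, h3⟩
    · rintro ⟨h1, h3⟩; exact ⟨h1, Or.inl (h1.trans ht1), h3⟩
  have hE1F : E1 ∩ F = E1 ∩ S0 := by
    ext ω
    simp only [hFdef, hE1def, hS1def, iosEv, mem_inter_iff, mem_setOf_eq, mem_union]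
    constructor
    · rintro ⟨h1, h2, _⟩; exact ⟨h1, h2⟩
    · rintro ⟨h1, h2⟩; exact ⟨h1, h2, Or.inl (h1.trans ht1)⟩
  -- a ≤ min(μ E1, s0)
  have ha_le : a ≤ min (μ E1).toReal s0 := by
    refine le_min (tr_le _ _ (measure_mono inter_subset_left)) ?_
    rw [hadef, hE1F]
    exact tr_le _ _ (measure_mono inter_subset_right)
  -- b ≤ min(μ E0, s1)
  have hb_le : b ≤ min (μ E0).toReal s1 := by
    refine le_min (tr_le _ _ (measure_mono inter_subset_left)) ?_
    rw [hbdef, hE0F]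
    exact tr_le _ _ (measure_mono inter_subset_right)
  -- generic lower bound: μ S ≤ μ(E∩S) + μ(Eᶜ-ish)
  have lower : ∀ (T1 : Ω → ℝ) (S : Set Ω),
      (μ S).toReal - (μ {ω | t < T1 ω}).toReal ≤ (μ ({ω | T1 ω ≤ t} ∩ S)).toReal := by
    intro T1 S
    have hsub : S ⊆ ({ω | T1 ω ≤ t} ∩ S) ∪ {ω | t < T1 ω} := by
      intro ω hω
      rcases le_or_gt (T1 ω) t with h | h
      · exact Or.inl ⟨h, hω⟩
      · exact Or.inr h
    have h1 : μ S ≤ μ ({ω | T1 ω ≤ t} ∩ S) + μ {ω | t < T1 ω} :=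
      (measure_mono hsub).trans (measure_union_le _ _)
    have h2 := ENNReal.toReal_le_toReal (measure_ne_top μ S)
      (by finiteness : μ ({ω | T1 ω ≤ t} ∩ S) + μ {ω | t < T1 ω} ≠ ⊤) |>.mpr h1
    rw [ENNReal.toReal_add (measure_ne_top _ _) (measure_ne_top _ _)] at h2
    linarith
  -- b ≥ max 0 (s1 - μ(t<T1₀))
  have hb_ge : max 0 (s1 - (μ {ω | t < T1₀ ω}).toReal) ≤ b := by
    refine max_le ENNReal.toReal_nonneg ?_
    rw [hbdef, hE0F]
    have := lower T1₀ S1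
    simpa [hs1def, hE0def] using this
  -- a ≥ max 0 (s0 - μ(t<T1₁))
  have ha_ge : max 0 (s0 - (μ {ω | t < T1₁ ω}).toReal) ≤ a := by
    refine max_le ENNReal.toReal_nonneg ?_
    rw [hadef, hE1F]
    have := lower T1₁ S0
    simpa [hs0def, hE1def] using this
  -- a - b bounds
  have hu : a - b ≤ uDot μ T1₀ T2₀ T1₁ T2₁ t := by
    simp only [uDot, ← hS0def, ← hS1def, ← hE1def, ← hs0def, ← hs1def]
    have : min (μ E1).toReal s0 = min (μ {ω | T1₁ ω ≤ t}).toReal s0 := by rw [hE1def]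
    linarith [ha_le, hb_ge, this.ge]
  have hl : lDot μ T1₀ T2₀ T1₁ T2₁ t ≤ a - b := by
    simp only [lDot, ← hS0def, ← hS1def, ← hE0def, ← hs0def, ← hs1def]
    have : min (μ E0).toReal s1 = min (μ {ω | T1₀ ω ≤ t}).toReal s1 := by rw [hE0def]
    linarith [hb_le, ha_ge, this.le]
  -- FICE = (a - b)/p
  have hFICE : FICE μ T1₀ T2₀ T1₁ T2₁ t = (a - b) / p := by
    simp only [FICE, condProbR, ← hS0def, ← hS1def, ← hFdef, ← hE0def, ← hE1def,
      ← hadef, ← hbdef, ← hpdef]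
    ring
  set L := LPiDot μ T1₀ T2₀ T1₁ T2₁
  set U := UPiDot μ T1₀ T2₀ T1₁ T2₁
  set u := uDot μ T1₀ T2₀ T1₁ T2₁ t
  set l := lDot μ T1₀ T2₀ T1₁ T2₁ t
  rw [hFICE]
  refine ⟨fun hu0 => ?_, fun hu0 => ?_, fun hl0 => ?_, fun hl0 => ?_⟩
  · rw [div_le_div_iff₀ hppos hLpos']
    nlinarith [mul_le_mul_of_nonneg_left hL_le_p hu0]
  · rw [div_le_div_iff₀ hppos hUpos]
    nlinarith [mul_le_mul_of_nonpos_left hp_le_U hu0.le]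
  · rw [div_le_div_iff₀ hUpos hppos]
    nlinarith [mul_le_mul_of_nonneg_left hp_le_U hl0]
  · rw [div_le_div_iff₀ hLpos' hppos]
    nlinarith [mul_le_mul_of_nonpos_left hL_le_p hl0.le]
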